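/- Let D be a dimension type with dim D = n, where n ≥ 1. Then dim(D ⊞ D) = 2n − 1 or dim(D ⊞ D) = 2n. (This is the combinatorial counterpart, via the Bockstein product theorem, of the fact that for an n-dimensional compactum X one has dim(X × X) ∈ {2n − 1, 2n}; X is a Boltyanskii compactum when dim(X × X) = 2n − 1.) -/
import Mathlib


/-- The Bockstein index set σ: the symbol ℚ together with, for every prime `p`,
the symbols ℤ_p, ℤ_{p^∞} and ℤ_{(p)}. -/
inductive Bock : Type
  | Q : Bock
  | Zp (p : Nat.Primes) : Bock
  | ZpInf (p : Nat.Primes) : Bock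
  | Zloc (p : Nat.Primes) : Bock

/-- `D` is `p`-regular: `D(ℤ_{(p)}) = D(ℤ_p) = D(ℤ_{p^∞}) = D(ℚ)`. -/
def pRegular (D : Bock → ℕ) (p : Nat.Primes) : Prop :=
  D (.Zloc p) = D (.Zp p) ∧ D (.Zp p) = D (.ZpInf p) ∧ D (.ZpInf p) = D .Q

/-- `D` is `p⁺`-singular: `D(ℤ_{p^∞}) = D(ℤ_p)` and
`D(ℤ_{(p)}) = max (D(ℚ)) (D(ℤ_{p^∞}) + 1)`. -/
def pPlusSingular (D : Bock → ℕ) (p : Nat.Primes) : Prop :=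
  D (.ZpInf p) = D (.Zp p) ∧ D (.Zloc p) = max (D .Q) (D (.ZpInf p) + 1)

/-- `D` is `p⁻`-singular: `D(ℤ_p) ≥ 1`, `D(ℤ_{p^∞}) = D(ℤ_p) - 1` and
`D(ℤ_{(p)}) = max (D(ℚ)) (D(ℤ_{p^∞}) + 1)`. -/
def pMinusSingular (D : Bock → ℕ) (p : Nat.Primes) : Prop :=
  1 ≤ D (.Zp p) ∧ D (.ZpInf p) = D (.Zp p) - 1 ∧
    D (.Zloc p) = max (D .Q) (D (.ZpInf p) + 1)

instance (D : Bock → ℕ) (p : Nat.Primes) : Decidable (pRegular D p) := by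
  unfold pRegular; infer_instance

instance (D : Bock → ℕ) (p : Nat.Primes) : Decidable (pPlusSingular D p) := by
  unfold pPlusSingular; infer_instance

instance (D : Bock → ℕ) (p : Nat.Primes) : Decidable (pMinusSingular D p) := by
  unfold pMinusSingular; infer_instance

/-- A dimension type: for every prime `p`, `D` is `p`-regular, `p⁺`-singular
or `p⁻`-singular. -/
def DimensionType (D : Bock → ℕ) : Prop :=
  ∀ p : Nat.Primes, pRegular D p ∨ pPlusSingular D p ∨ pMinusSingular D p

/-- The `p`-singularity sign ε of `D`: `+1` if `p⁺`-singular, `-1` if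
`p⁻`-singular, `0` otherwise (i.e. `p`-regular, for dimension types). -/
def bsign (D : Bock → ℕ) (p : Nat.Primes) : ℤ :=
  if pPlusSingular D p then 1 else if pMinusSingular D p then -1 else 0

/-- The product of signs: `ε⊗0 = 0⊗ε = ε`, `ε⊗ε = ε`, `+⊗− = −⊗+ = −`. -/
def signMul (a b : ℤ) : ℤ :=
  if a = 0 then b else if b = 0 then a else if a = b then a else -1

/-- The operation `D₁ ⊞ D₂` suggested by the Bockstein product theorem. -/
def boxplus (D₁ D₂ : Bock → ℕ) : Bock → ℕ := fun G =>
  match G with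
  | .Q => D₁ .Q + D₂ .Q
  | .Zp p => D₁ (.Zp p) + D₂ (.Zp p)
  | .ZpInf p =>
      let e := signMul (bsign D₁ p) (bsign D₂ p)
      let q := D₁ .Q + D₂ .Q
      let s := D₁ (.Zp p) + D₂ (.Zp p)
      if e = 0 then q else if e = 1 then s else s - 1
  | .Zloc p =>
      let e := signMul (bsign D₁ p) (bsign D₂ p)
      let q := D₁ .Q + D₂ .Q
      let s := D₁ (.Zp p) + D₂ (.Zp p)
      if e = 0 then q else if e = 1 then max q (s + 1) else max q s

/-- The involution `D ↦ D*` exchanging the decorations `+` and `−`. -/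
def dual (D : Bock → ℕ) : Bock → ℕ := fun G =>
  match G with
  | .Q => D .Q
  | .Zp p => D (.Zp p)
  | .ZpInf p =>
      if pPlusSingular D p then D (.Zp p) - 1
      else if pMinusSingular D p then D (.Zp p)
      else D (.ZpInf p)
  | .Zloc p =>
      if pPlusSingular D p then max (D .Q) (D (.Zp p))
      else if pMinusSingular D p then max (D .Q) (D (.Zp p) + 1)
      else D (.Zloc p)

/-- The operation `D₁ ⊕ D₂ = (D₁* ⊞ D₂*)*`. -/
def oplus (D₁ D₂ : Bock → ℕ) : Bock → ℕ :=
  dual (boxplus (dual D₁) (dual D₂))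

/-- The pointwise order on functions `σ → ℕ`. -/
def dle (D D' : Bock → ℕ) : Prop := ∀ G, D G ≤ D' G

/-- `dim D = n`: `D(G) ≤ n` for every `G ∈ σ` and `D(G) = n` for some `G ∈ σ`. -/
def dimEq (D : Bock → ℕ) (n : ℕ) : Prop :=
  (∀ G, D G ≤ n) ∧ ∃ G, D G = n



lemma signMul_self (a : ℤ) : signMul a a = a := by
  unfold signMul; split_ifs <;> simp_all

lemma pPlus_pMinus_absurd {D : Bock → ℕ} {p : Nat.Primes}
    (hp : pPlusSingular D p) (hm : pMinusSingular D p) : False := by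
  obtain ⟨h1, _⟩ := hp; obtain ⟨h2, h3, _⟩ := hm; omega

lemma bsign_pos {D : Bock → ℕ} {p : Nat.Primes} (h : pPlusSingular D p) :
    bsign D p = 1 := by simp [bsign, h]

lemma bsign_neg {D : Bock → ℕ} {p : Nat.Primes} (hm : pMinusSingular D p) :
    bsign D p = -1 := by
  have : ¬ pPlusSingular D p := fun hp => pPlus_pMinus_absurd hp hm
  simp [bsign, this, hm]

lemma bsign_zero {D : Bock → ℕ} {p : Nat.Primes}
    (hp : ¬ pPlusSingular D p) (hm : ¬ pMinusSingular D p) : bsign D p = 0 := by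
  simp [bsign, hp, hm]

lemma boxplus_ZpInf_plus {D : Bock → ℕ} {p : Nat.Primes} (h : pPlusSingular D p) :
    boxplus D D (.ZpInf p) = D (.Zp p) + D (.Zp p) := by
  simp [boxplus, bsign_pos h, signMul_self]

lemma boxplus_ZpInf_minus {D : Bock → ℕ} {p : Nat.Primes} (h : pMinusSingular D p) :
    boxplus D D (.ZpInf p) = D (.Zp p) + D (.Zp p) - 1 := by
  simp [boxplus, bsign_neg h, signMul_self]

lemma boxplus_ZpInf_zero {D : Bock → ℕ} {p : Nat.Primes}
    (hp : ¬ pPlusSingular D p) (hm : ¬ pMinusSingular D p) :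
    boxplus D D (.ZpInf p) = D .Q + D .Q := by
  simp [boxplus, bsign_zero hp hm, signMul_self]

lemma boxplus_Zloc_plus {D : Bock → ℕ} {p : Nat.Primes} (h : pPlusSingular D p) :
    boxplus D D (.Zloc p) = max (D .Q + D .Q) (D (.Zp p) + D (.Zp p) + 1) := by
  simp [boxplus, bsign_pos h, signMul_self]

lemma boxplus_Zloc_minus {D : Bock → ℕ} {p : Nat.Primes} (h : pMinusSingular D p) :
    boxplus D D (.Zloc p) = max (D .Q + D .Q) (D (.Zp p) + D (.Zp p)) := by
  simp [boxplus, bsign_neg h, signMul_self]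

lemma boxplus_Zloc_zero {D : Bock → ℕ} {p : Nat.Primes}
    (hp : ¬ pPlusSingular D p) (hm : ¬ pMinusSingular D p) :
    boxplus D D (.Zloc p) = D .Q + D .Q := by
  simp [boxplus, bsign_zero hp hm, signMul_self]

/-- Let D be a dimension type with dim D = n, where n ≥ 1. Then
dim(D ⊞ D) = 2n − 1 or dim(D ⊞ D) = 2n. -/
theorem dim_boxplus_self (D : Bock → ℕ) (hD : DimensionType D)
    (n : ℕ) (hn : 1 ≤ n) (hdim : dimEq D n) :
    dimEq (boxplus D D) (2 * n - 1) ∨ dimEq (boxplus D D) (2 * n) := by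
  obtain ⟨hub, G0, hG0⟩ := hdim
  have hupper : ∀ G, boxplus D D G ≤ 2 * n := by
    intro G
    cases G with
    | Q => have := hub .Q; simp only [boxplus]; omega
    | Zp p => have := hub (.Zp p); simp only [boxplus]; omega
    | ZpInf p =>
        by_cases hp : pPlusSingular D p
        · rw [boxplus_ZpInf_plus hp]; have := hub (.Zp p); omega
        · by_cases hm : pMinusSingular D p
          · rw [boxplus_ZpInf_minus hm]; have := hub (.Zp p); omega
          · rw [boxplus_ZpInf_zero hp hm]; have := hub .Q; omega
    | Zloc p =>
        by_cases hp : pPlusSingular D p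
        · rw [boxplus_Zloc_plus hp]
          obtain ⟨h1, h2⟩ := hp
          have h3 := hub (.Zloc p); have h4 := hub .Q
          rw [h2] at h3; omega
        · by_cases hm : pMinusSingular D p
          · rw [boxplus_Zloc_minus hm]
            have := hub (.Zp p); have := hub .Q; omega
          · rw [boxplus_Zloc_zero hp hm]; have := hub .Q; omega
  have hex : ∃ G, boxplus D D G = 2 * n - 1 ∨ boxplus D D G = 2 * n := by
    cases G0 with
    | Q => exact ⟨.Q, Or.inr (by simp only [boxplus]; omega)⟩
    | Zp p => exact ⟨.Zp p, Or.inr (by simp only [boxplus]; omega)⟩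
    | ZpInf p =>
        by_cases hp : pPlusSingular D p
        · refine ⟨.Zp p, Or.inr ?_⟩
          obtain ⟨h1, h2⟩ := hp
          simp only [boxplus]; omega
        · by_cases hm : pMinusSingular D p
          · exfalso
            obtain ⟨h1, h2, h3⟩ := hm
            have := hub (.Zp p); omega
          · rcases hD p with hr | h | h
            · refine ⟨.Q, Or.inr ?_⟩
              obtain ⟨h1, h2, h3⟩ := hr
              simp only [boxplus]; omega
            · exact absurd h hp
            · exact absurd h hm
    | Zloc p =>
        by_cases hp : pPlusSingular D p
        · by_cases hq : D .Q = n
          · exact ⟨.Q, Or.inr (by simp only [boxplus]; omega)⟩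
          · refine ⟨.Zloc p, Or.inl ?_⟩
            rw [boxplus_Zloc_plus hp]
            obtain ⟨h1, h2⟩ := hp
            have h4 := hub .Q
            rw [h2] at hG0; omega
        · by_cases hm : pMinusSingular D p
          · by_cases hq : D .Q = n
            · exact ⟨.Q, Or.inr (by simp only [boxplus]; omega)⟩
            · refine ⟨.Zp p, Or.inr ?_⟩
              obtain ⟨h1, h2, h3⟩ := hm
              have h4 := hub .Q
              rw [h3] at hG0
              simp only [boxplus]; omega
          · rcases hD p with hr | h | h
            · refine ⟨.Q, Or.inr ?_⟩
              obtain ⟨h1, h2, h3⟩ := hr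
              simp only [boxplus]; omega
            · exact absurd h hp
            · exact absurd h hm
  by_cases h2n : ∃ G, boxplus D D G = 2 * n
  · exact Or.inr ⟨hupper, h2n⟩
  · left
    push_neg at h2n
    refine ⟨fun G => ?_, ?_⟩
    · have := hupper G; have := h2n G; omega
    · obtain ⟨G, hG⟩ := hex
      rcases hG with h | h
      · exact ⟨G, h⟩
      · exact absurd h (h2n G)
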